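/- For any real numbers x and y with 2 ≤ y ≤ x, one has Σ_{n ≤ x/y} τ(φ(n))/n ≪ ((log x)⁵ / x)·Σ_{n ≤ x} τ(φ(n)), with an absolute implied constant. -/

import Mathlib

open Filter Finset Real

/-- The number-of-divisors function τ. -/
noncomputable def tauN (n : ℕ) : ℕ := n.divisors.card

lemma tauN_le_of_dvd {a b : ℕ} (hb : b ≠ 0) (h : a ∣ b) : tauN a ≤ tauN b :=
  Finset.card_le_card (Nat.divisors_subset_of_dvd hb h)

lemma tauN_totient_le {n N : ℕ} (hN : N ≠ 0) (h : n ∣ N) :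
    tauN n.totient ≤ tauN N.totient :=
  tauN_le_of_dvd (Nat.totient_pos.mpr (Nat.pos_of_ne_zero hN)).ne'
    (Nat.totient_dvd_of_dvd h)

/-- Chebyshev-type lower bound from the central binomial coefficient. -/
lemma cheb_aux (n : ℕ) (hn : 1 ≤ n) :
    (n : ℝ) * Real.log 2 ≤
      (((Finset.range (2*n+1)).filter Nat.Prime).card : ℝ) * Real.log (2*n) := by
  set pc : ℕ := ((Finset.range (2*n+1)).filter Nat.Prime).card with hpc
  have hpc1 : 1 ≤ pc := by
    have : (2 : ℕ) ∈ (Finset.range (2*n+1)).filter Nat.Prime := by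
      simp only [Finset.mem_filter, Finset.mem_range]
      exact ⟨by omega, Nat.prime_two⟩
    exact Finset.card_pos.mpr ⟨2, this⟩
  have hcb : 4 ^ n ≤ 2 * n * Nat.centralBinom n :=
    Nat.four_pow_le_two_mul_self_mul_centralBinom n hn
  have hprod : Nat.centralBinom n ≤ (2*n) ^ pc := by
    have h2 : ∏ p ∈ (Finset.range (2*n+1)).filter Nat.Prime,
            p ^ (Nat.centralBinom n).factorization p
        = ∏ p ∈ Finset.range (2*n+1), p ^ (Nat.centralBinom n).factorization p := by
      refine Finset.prod_subset (Finset.filter_subset _ _) (fun p hp hnp => ?_)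
      have hnpr : ¬ p.Prime := by
        simp only [Finset.mem_filter] at hnp
        tauto
      rw [Nat.factorization_eq_zero_of_not_prime _ hnpr, pow_zero]
    calc Nat.centralBinom n
        = ∏ p ∈ Finset.range (2*n+1), p ^ (Nat.centralBinom n).factorization p :=
          (Nat.prod_pow_factorization_centralBinom n).symm
      _ = ∏ p ∈ (Finset.range (2*n+1)).filter Nat.Prime,
            p ^ (Nat.centralBinom n).factorization p := h2.symm
      _ ≤ ∏ _p ∈ (Finset.range (2*n+1)).filter Nat.Prime, (2*n) := by
          refine Finset.prod_le_prod' ?_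
          intro p _
          exact Nat.pow_factorization_choose_le (by omega)
      _ = (2*n) ^ pc := by rw [Finset.prod_const]
  have h4 : (4:ℕ) ^ n ≤ (2*n) ^ (pc + 1) := by
    calc (4:ℕ)^n ≤ 2*n * Nat.centralBinom n := hcb
      _ ≤ 2*n * (2*n)^pc := Nat.mul_le_mul_left _ hprod
      _ = (2*n)^(pc+1) := by ring
  -- move to ℝ
  have h4R : (4:ℝ) ^ n ≤ ((2*n : ℕ) : ℝ) ^ (pc + 1) := by
    exact_mod_cast h4
  have h2n1 : (1:ℝ) ≤ ((2*n : ℕ) : ℝ) := by exact_mod_cast (by omega : 1 ≤ 2*n)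
  have hlog := Real.log_le_log (by positivity) h4R
  rw [Real.log_pow, Real.log_pow] at hlog
  have hlog4 : Real.log 4 = 2 * Real.log 2 := by
    rw [show (4:ℝ) = 2^2 by norm_num, Real.log_pow]; push_cast; ring
  have hlog2n : (0:ℝ) ≤ Real.log ((2*n : ℕ) : ℝ) := Real.log_nonneg h2n1
  have hpcR : (pc : ℝ) + 1 ≤ 2 * pc := by
    have : (1:ℝ) ≤ (pc : ℝ) := by exact_mod_cast hpc1
    linarith
  have : (n:ℝ) * (2 * Real.log 2) ≤ 2 * pc * Real.log ((2*n:ℕ):ℝ) := by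
    calc (n:ℝ) * (2 * Real.log 2) = (n:ℝ) * Real.log 4 := by rw [hlog4]
      _ ≤ ((pc:ℝ) + 1) * Real.log ((2*n:ℕ):ℝ) := by
          push_cast at hlog ⊢; linarith
      _ ≤ 2 * pc * Real.log ((2*n:ℕ):ℝ) := by
          exact mul_le_mul_of_nonneg_right hpcR hlog2n
  have h2n : ((2*n : ℕ) : ℝ) = ((2*n : ℕ) : ℝ) := rfl
  push_cast at this ⊢
  linarith

lemma cheb (M : ℕ) (hM : 2 ≤ M) :
    (M : ℝ) * Real.log 2 / 4 ≤
      (((Finset.range (M+1)).filter Nat.Prime).card : ℝ) * Real.log M := by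
  set n := M / 2 with hn
  have hn1 : 1 ≤ n := by omega
  have h2n : 2*n ≤ M := by omega
  have h4n : M ≤ 4*n := by omega
  have hbase := cheb_aux n hn1
  have hsub : ((Finset.range (2*n+1)).filter Nat.Prime).card
      ≤ ((Finset.range (M+1)).filter Nat.Prime).card := by
    refine Finset.card_le_card (Finset.filter_subset_filter _ ?_)
    exact Finset.range_subset_range.mpr (by omega)
  have hlogle : Real.log (2*n) ≤ Real.log M := by
    refine Real.log_le_log (by positivity) ?_
    exact_mod_cast h2n
  have hlog2n : (0:ℝ) ≤ Real.log (2*n) := by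
    refine Real.log_nonneg ?_
    exact_mod_cast (by omega : 1 ≤ 2*n)
  have hchain : (((Finset.range (2*n+1)).filter Nat.Prime).card : ℝ) * Real.log (2*n)
      ≤ (((Finset.range (M+1)).filter Nat.Prime).card : ℝ) * Real.log M := by
    refine mul_le_mul ?_ hlogle hlog2n (by positivity)
    exact_mod_cast hsub
  have hM4 : (M:ℝ) / 4 ≤ (n:ℝ) := by
    have : (M:ℝ) ≤ 4*n := by exact_mod_cast h4n
    linarith
  have hlog2 : (0:ℝ) < Real.log 2 := Real.log_pos (by norm_num)
  have : (M:ℝ)/4 * Real.log 2 ≤ (n:ℝ) * Real.log 2 :=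
    mul_le_mul_of_nonneg_right hM4 hlog2.le
  push_cast at hbase
  linarith

/-- Double counting: each `n ≤ T` is multiplied by primes `p ≤ X/n`; each product `np ≤ X`
is hit at most `ω(np) ≤ log₂ X` times, and `τ(φ(n)) ≤ τ(φ(np))`. -/
lemma key_count (T X : ℕ) :
    ∑ n ∈ Finset.Icc 1 T,
        tauN (Nat.totient n) * ((Finset.range (X / n + 1)).filter Nat.Prime).card
      ≤ Nat.log 2 X * ∑ b ∈ Finset.Icc 1 X, tauN (Nat.totient b) := by
  set f : ℕ → ℕ := fun m => tauN (Nat.totient m) with hfdef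
  set S0 : Finset ((_ : ℕ) × ℕ) :=
    (Finset.Icc 1 T).sigma (fun n => (Finset.range (X / n + 1)).filter Nat.Prime) with hS0
  have hmem : ∀ q ∈ S0, q.2.Prime ∧ 1 ≤ q.1 ∧ q.1 * q.2 ≤ X := by
    intro q hq
    rw [hS0, Finset.mem_sigma] at hq
    obtain ⟨hq1, hq2⟩ := hq
    rw [Finset.mem_filter, Finset.mem_range] at hq2
    rw [Finset.mem_Icc] at hq1
    have hle : q.2 ≤ X / q.1 := by omega
    refine ⟨hq2.2, hq1.1, ?_⟩
    have := (Nat.le_div_iff_mul_le (by omega : 0 < q.1)).mp hle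
    rwa [mul_comm]
  have step1 : ∑ n ∈ Finset.Icc 1 T,
      f n * ((Finset.range (X / n + 1)).filter Nat.Prime).card
      ≤ ∑ n ∈ Finset.Icc 1 T,
          ∑ p ∈ (Finset.range (X / n + 1)).filter Nat.Prime, f (n * p) := by
    refine Finset.sum_le_sum (fun n hn => ?_)
    have hn1 : 1 ≤ n := (Finset.mem_Icc.mp hn).1
    have h := Finset.card_nsmul_le_sum
      ((Finset.range (X / n + 1)).filter Nat.Prime) (fun p => f (n * p)) (f n)
      (fun p hp => ?_)
    · rw [smul_eq_mul, mul_comm] at h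
      exact h
    · have hp2 : p.Prime := (Finset.mem_filter.mp hp).2
      exact tauN_totient_le (Nat.mul_ne_zero (by omega) hp2.pos.ne') ⟨p, rfl⟩
  have step2 : ∑ n ∈ Finset.Icc 1 T,
      ∑ p ∈ (Finset.range (X / n + 1)).filter Nat.Prime, f (n * p)
      = ∑ q ∈ S0, f (q.1 * q.2) := by
    rw [hS0, Finset.sum_sigma]
  have step3 : ∑ q ∈ S0, f (q.1 * q.2)
      = ∑ b ∈ S0.image (fun q => q.1 * q.2),
          (S0.filter (fun q => q.1 * q.2 = b)).card • f b :=
    Finset.sum_comp f (fun q : (_ : ℕ) × ℕ => q.1 * q.2)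
  have hfiber : ∀ b, (S0.filter (fun q : (_ : ℕ) × ℕ => q.1 * q.2 = b)).card ≤ Nat.log 2 X := by
    intro b
    rcases Finset.eq_empty_or_nonempty (S0.filter (fun q => q.1 * q.2 = b)) with he | ⟨q0, hq0⟩
    · simp [he]
    · rw [Finset.mem_filter] at hq0
      have h0 := hmem q0 hq0.1
      have hb0 : b ≠ 0 := by
        rw [← hq0.2]
        exact Nat.mul_ne_zero (by omega) h0.1.pos.ne'
      have hbX : b ≤ X := hq0.2 ▸ h0.2.2
      have hcard1 : (S0.filter (fun q : (_ : ℕ) × ℕ => q.1 * q.2 = b)).card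
          ≤ b.primeFactors.card := by
        refine Finset.card_le_card_of_injOn (fun q => q.2) ?_ ?_
        · intro q hq
          rw [Finset.mem_coe, Finset.mem_filter] at hq
          have h := hmem q hq.1
          refine Nat.mem_primeFactors.mpr ⟨h.1, ⟨q.1, by rw [← hq.2]; ring⟩, hb0⟩
        · intro q hq q' hq' heq
          rw [Finset.mem_coe, Finset.mem_filter] at hq hq'
          have h1 := hmem q hq.1
          have h2 := hmem q' hq'.1
          obtain ⟨n, p⟩ := q
          obtain ⟨n', p'⟩ := q'
          simp only at heq
          subst heq
          have : n = n' := by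
            have hp0 : 0 < p := h1.1.pos
            have : n * p = n' * p := by rw [hq.2, hq'.2]
            exact Nat.eq_of_mul_eq_mul_right hp0 this
          subst this
          rfl
      have hcard2 : b.primeFactors.card ≤ Nat.log 2 b := by
        have h2pow : 2 ^ b.primeFactors.card ≤ b := by
          calc 2 ^ b.primeFactors.card ≤ ∏ p ∈ b.primeFactors, p :=
                Finset.pow_card_le_prod _ _ _
                  (fun p hp => (Nat.prime_of_mem_primeFactors hp).two_le)
            _ ≤ b := Nat.le_of_dvd (Nat.pos_of_ne_zero hb0) (Nat.prod_primeFactors_dvd b)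
        exact (Nat.le_log_iff_pow_le (by norm_num) hb0).mpr h2pow
      exact hcard1.trans (hcard2.trans (Nat.log_mono_right hbX))
  have himg : S0.image (fun q => q.1 * q.2) ⊆ Finset.Icc 1 X := by
    intro b hb
    obtain ⟨q, hq, rfl⟩ := Finset.mem_image.mp hb
    have h := hmem q hq
    rw [Finset.mem_Icc]
    exact ⟨by nlinarith [h.1.two_le, h.2.1], h.2.2⟩
  calc ∑ n ∈ Finset.Icc 1 T,
        f n * ((Finset.range (X / n + 1)).filter Nat.Prime).card
      ≤ ∑ n ∈ Finset.Icc 1 T,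
          ∑ p ∈ (Finset.range (X / n + 1)).filter Nat.Prime, f (n * p) := step1
    _ = ∑ b ∈ S0.image (fun q => q.1 * q.2),
          (S0.filter (fun q => q.1 * q.2 = b)).card • f b := by rw [step2, step3]
    _ ≤ ∑ b ∈ S0.image (fun q => q.1 * q.2), Nat.log 2 X * f b := by
        refine Finset.sum_le_sum (fun b _ => ?_)
        rw [smul_eq_mul]
        exact Nat.mul_le_mul_right _ (hfiber b)
    _ ≤ ∑ b ∈ Finset.Icc 1 X, Nat.log 2 X * f b :=
        Finset.sum_le_sum_of_subset himg
    _ = Nat.log 2 X * ∑ b ∈ Finset.Icc 1 X, f b := by rw [Finset.mul_sum]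

/-- For any 2 ≤ y ≤ x,
Σ_{n ≤ x/y} τ(φ(n))/n ≪ ((log x)⁵ / x)·Σ_{n ≤ x} τ(φ(n)), with an absolute constant. -/
theorem sum_tau_phi_div_bound :
    ∃ C : ℝ, 0 < C ∧ ∀ x y : ℝ, 2 ≤ y → y ≤ x →
      (∑ n ∈ Finset.Icc 1 ⌊x / y⌋₊, (tauN (Nat.totient n) : ℝ) / (n : ℝ)) ≤
        C * (Real.log x ^ 5 / x) * ∑ n ∈ Finset.Icc 1 ⌊x⌋₊, (tauN (Nat.totient n) : ℝ) := by
  have hlog2 : (0:ℝ) < Real.log 2 := Real.log_pos (by norm_num)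
  refine ⟨8 / Real.log 2 ^ 5, by positivity, ?_⟩
  intro x y h2y hyx
  have hx2 : (2:ℝ) ≤ x := h2y.trans hyx
  have hx0 : (0:ℝ) < x := by linarith
  have hy0 : (0:ℝ) < y := by linarith
  have hlogx2 : Real.log 2 ≤ Real.log x := Real.log_le_log (by norm_num) hx2
  have hlogx : (0:ℝ) < Real.log x := lt_of_lt_of_le hlog2 hlogx2
  set a := Real.log 2 with ha
  set l := Real.log x with hl
  set T := ⌊x / y⌋₊ with hT
  set X := ⌊x⌋₊ with hX
  have hX2 : 2 ≤ X := Nat.le_floor (by exact_mod_cast hx2)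
  have hX0 : X ≠ 0 := by omega
  have hXx : (X:ℝ) ≤ x := Nat.floor_le hx0.le
  -- lower bound on the number of primes up to X / n
  have hcard : ∀ n ∈ Finset.Icc 1 T,
      a * x / (8 * n * l)
        ≤ (((Finset.range (X / n + 1)).filter Nat.Prime).card : ℝ) := by
    intro n hn
    obtain ⟨hn1, hnT⟩ := Finset.mem_Icc.mp hn
    have hn0 : (0:ℝ) < n := by exact_mod_cast hn1
    have hn1R : (1:ℝ) ≤ n := by exact_mod_cast hn1
    have hnxy : (n:ℝ) ≤ x / y := by
      refine le_trans ?_ (Nat.floor_le (by positivity))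
      exact_mod_cast hnT
    have hyxn : y ≤ x / n := by
      rw [le_div_iff₀ hn0]
      rw [le_div_iff₀ hy0] at hnxy
      linarith [hnxy]
    have hxn2 : (2:ℝ) ≤ x / n := le_trans h2y hyxn
    have hMfloor : X / n = ⌊x / (n:ℝ)⌋₊ := (Nat.floor_div_natCast x n).symm
    set M := X / n with hM
    have hM2 : 2 ≤ M := by
      rw [hMfloor]
      exact Nat.le_floor (by exact_mod_cast hxn2)
    have hcheb := cheb M hM2
    have hMxn : (M:ℝ) ≤ x / n := by
      rw [hMfloor]
      exact Nat.floor_le (by positivity)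
    have hMx : (M:ℝ) ≤ x := le_trans hMxn (div_le_self hx0.le hn1R)
    have hlogM : Real.log M ≤ l := Real.log_le_log (by positivity) hMx
    have hMlow : x / (2*n) ≤ (M:ℝ) := by
      rw [hMfloor]
      have h1 : x/(n:ℝ) - 1 < (⌊x/(n:ℝ)⌋₊ : ℝ) := Nat.sub_one_lt_floor _
      have hhalf : x/(2*n) = (x/n)/2 := by
        rw [div_div]; ring_nf
      have : x/(2*n) ≤ x/n - 1 := by
        rw [hhalf]; linarith
      linarith
    have hpc0 : (0:ℝ) ≤ (((Finset.range (M+1)).filter Nat.Prime).card : ℝ) :=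
      Nat.cast_nonneg _
    have hstep : x/(2*n) * a / 4
        ≤ (((Finset.range (M+1)).filter Nat.Prime).card : ℝ) * l := by
      calc x/(2*n) * a / 4 ≤ (M:ℝ) * a / 4 := by
            have := mul_le_mul_of_nonneg_right hMlow hlog2.le
            linarith
        _ ≤ (((Finset.range (M+1)).filter Nat.Prime).card : ℝ) * Real.log M := hcheb
        _ ≤ (((Finset.range (M+1)).filter Nat.Prime).card : ℝ) * l :=
            mul_le_mul_of_nonneg_left hlogM hpc0
    rw [div_le_iff₀ (by positivity : (0:ℝ) < 8 * n * l)]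
    have heq : x/(2*n) * a / 4 = a * x / (8*n) := by
      field_simp; ring
    rw [heq] at hstep
    have h1 := (div_le_iff₀ (by positivity : (0:ℝ) < 8*(n:ℝ))).mp hstep
    calc a * x ≤ (((Finset.range (M+1)).filter Nat.Prime).card : ℝ) * l * (8*n) := h1
      _ = (((Finset.range (M+1)).filter Nat.Prime).card : ℝ) * (8 * n * l) := by ring
  -- notation for the two sums
  set L : ℝ := ∑ n ∈ Finset.Icc 1 T, (tauN (Nat.totient n) : ℝ) / (n : ℝ) with hLdef
  set S : ℝ := ∑ n ∈ Finset.Icc 1 X, (tauN (Nat.totient n) : ℝ) with hSdef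
  have hS0 : 0 ≤ S := Finset.sum_nonneg (fun n _ => by positivity)
  have hL0 : 0 ≤ L := Finset.sum_nonneg (fun n _ => by positivity)
  set B : ℝ := (Nat.log 2 X : ℝ) with hBdef
  have hB0 : 0 ≤ B := Nat.cast_nonneg _
  -- B * a ≤ l
  have hBa : B * a ≤ l := by
    have hpow : (2:ℝ) ^ (Nat.log 2 X) ≤ x := by
      calc (2:ℝ) ^ (Nat.log 2 X) = ((2 ^ (Nat.log 2 X) : ℕ) : ℝ) := by push_cast; ring
        _ ≤ (X : ℝ) := by exact_mod_cast Nat.pow_log_le_self 2 hX0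
        _ ≤ x := hXx
    have := Real.log_le_log (by positivity) hpow
    rw [Real.log_pow] at this
    push_cast at this ⊢
    linarith
  -- main inequality: (a*x/(8*l)) * L ≤ B * S
  have hmain : a * x / (8 * l) * L ≤ B * S := by
    have e1 : a * x / (8 * l) * L
        = ∑ n ∈ Finset.Icc 1 T, (tauN (Nat.totient n) : ℝ) * (a * x / (8 * n * l)) := by
      rw [hLdef, Finset.mul_sum]
      refine Finset.sum_congr rfl (fun n hn => ?_)
      have hn1 : 1 ≤ n := (Finset.mem_Icc.mp hn).1
      have hn0 : (n:ℝ) ≠ 0 := by positivity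
      field_simp
    have e2 : ∑ n ∈ Finset.Icc 1 T, (tauN (Nat.totient n) : ℝ) * (a * x / (8 * n * l))
        ≤ ∑ n ∈ Finset.Icc 1 T, (tauN (Nat.totient n) : ℝ)
            * (((Finset.range (X / n + 1)).filter Nat.Prime).card : ℝ) :=
      Finset.sum_le_sum (fun n hn =>
        mul_le_mul_of_nonneg_left (hcard n hn) (by positivity))
    have e3 : ∑ n ∈ Finset.Icc 1 T, (tauN (Nat.totient n) : ℝ)
            * (((Finset.range (X / n + 1)).filter Nat.Prime).card : ℝ)
        ≤ B * S := by
      rw [hBdef, hSdef]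
      have := key_count T X
      calc ∑ n ∈ Finset.Icc 1 T, (tauN (Nat.totient n) : ℝ)
            * (((Finset.range (X / n + 1)).filter Nat.Prime).card : ℝ)
          = ((∑ n ∈ Finset.Icc 1 T,
              tauN (Nat.totient n) * ((Finset.range (X / n + 1)).filter Nat.Prime).card : ℕ) : ℝ) := by
            push_cast; ring
        _ ≤ ((Nat.log 2 X * ∑ b ∈ Finset.Icc 1 X, tauN (Nat.totient b) : ℕ) : ℝ) := by
            exact_mod_cast this
        _ = (Nat.log 2 X : ℝ) * ∑ n ∈ Finset.Icc 1 X, (tauN (Nat.totient n) : ℝ) := by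
            push_cast; ring
    calc a * x / (8 * l) * L = _ := e1
      _ ≤ _ := e2
      _ ≤ B * S := e3
  -- unwind
  have hBS : B * S ≤ l / a * S := by
    refine mul_le_mul_of_nonneg_right ?_ hS0
    rw [le_div_iff₀ hlog2]
    exact hBa
  have hL1 : L ≤ 8 * l / (a * x) * (l / a * S) := by
    have hpos : (0:ℝ) < a * x / (8 * l) := by positivity
    have h2 : a * x / (8 * l) * L ≤ l / a * S := le_trans hmain hBS
    have h3 := mul_le_mul_of_nonneg_left h2 (by positivity : (0:ℝ) ≤ 8 * l / (a * x))
    have heq : 8 * l / (a * x) * (a * x / (8 * l) * L) = L := by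
      field_simp
    rwa [heq] at h3
  have hL2 : L ≤ (l/a)^2 * (8 / x * S) := by
    calc L ≤ 8 * l / (a * x) * (l / a * S) := hL1
      _ = (l/a)^2 * (8 / x * S) := by field_simp
  have hratio : (l/a)^2 ≤ (l/a)^5 := by
    refine pow_le_pow_right₀ ?_ (by norm_num)
    rw [le_div_iff₀ hlog2]
    linarith
  calc L ≤ (l/a)^2 * (8 / x * S) := hL2
    _ ≤ (l/a)^5 * (8 / x * S) :=
        mul_le_mul_of_nonneg_right hratio (by positivity)
    _ = 8 / a ^ 5 * (l ^ 5 / x) * S := by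
        field_simp
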